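/- Let u, u', w be nonzero complex numbers. Then the function z ↦ ((−w/u' − 0) * (z − u)) / ((−w/u' − z) * (0 − u)) tends to −w/(u' * u) as z tends to infinity in ℂ (i.e., along the cobounded filter on ℂ). Equivalently, the cross-ratio of the four points P₀ = −w/u', P₁ = 0, P₂ = ∞, P₃ = u on the Riemann sphere equals −w/(u'·u). -/

import Mathlib

/-- For nonzero complex numbers `u`, `u'`, `w`, the function
`z ↦ ((−w/u' − 0) * (z − u)) / ((−w/u' − z) * (0 − u))` tends to
`−w / (u' * u)` as `z → ∞` in `ℂ` (along the cobounded filter):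
the cross-ratio of `P₀ = −w/u'`, `P₁ = 0`, `P₂ = ∞`, `P₃ = u` equals
`−w/(u'·u)`. -/
theorem cross_ratio_tendsto (u u' w : ℂ) (hu : u ≠ 0) (hu' : u' ≠ 0)
    (hw : w ≠ 0) :
    Filter.Tendsto
      (fun z : ℂ => ((-w / u' - 0) * (z - u)) / ((-w / u' - z) * (0 - u)))
      (Bornology.cobounded ℂ) (nhds (-w / (u' * u))) := by
  have hG : Filter.Tendsto
      (fun t : ℂ => ((-w / u' - 0) * (1 - u * t)) / ((-w / u' * t - 1) * (0 - u)))
      (nhds 0) (nhds (-w / (u' * u))) := by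
    have hc : ContinuousAt
        (fun t : ℂ => ((-w / u' - 0) * (1 - u * t)) / ((-w / u' * t - 1) * (0 - u))) 0 := by
      apply ContinuousAt.div
      · fun_prop
      · fun_prop
      · simp [hu]
    have heq : ((-w / u' - 0) * (1 - u * 0)) / ((-w / u' * 0 - 1) * (0 - u))
        = -w / (u' * u) := by simp only [mul_zero, sub_zero, zero_sub, mul_one]; field_simp
    simpa [heq, div_div] using hc.tendsto
  have hinv : Filter.Tendsto (fun z : ℂ => z⁻¹) (Bornology.cobounded ℂ) (nhds 0) :=
    Filter.tendsto_inv₀_cobounded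
  have hcomp := hG.comp hinv
  apply hcomp.congr'
  filter_upwards [Bornology.eventually_ne_cobounded (0 : ℂ)] with z hz
  have hz' : z ≠ 0 := hz
  simp only [Function.comp]
  have h1 : 1 - u * z⁻¹ = (z - u) * z⁻¹ := by field_simp
  have h2 : -w / u' * z⁻¹ - 1 = (-w / u' - z) * z⁻¹ := by field_simp
  rw [h1, h2]
  rw [show (-w / u' - z) * z⁻¹ * (0 - u) = ((-w / u' - z) * (0 - u)) * z⁻¹ by ring,
    show (-w / u' - 0) * ((z - u) * z⁻¹) = ((-w / u' - 0) * (z - u)) * z⁻¹ by ring,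
    mul_div_mul_right _ _ (inv_ne_zero hz')]
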